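/- Let ℓ₀ ∈ ℝ and let R, K_ℓ, K_R : [ℓ₀,∞) → ℝ be smooth with R > 0, H = 2R'/R. Assume the decay conditions |H − 2/ℓ| = O(ℓ⁻²), |K_ℓ| = O(ℓ⁻²), and |trK| = O(ℓ⁻³) as ℓ → ∞, where trK = K_ℓ + 2K_R. Then any C¹ solution k on [ℓ₀,∞) of the ODE ∂_ℓ k = −K_ℓ k² − H k + trK that is uniformly bounded satisfies k(ℓ) → 0 as ℓ → ∞; in fact |k(ℓ)| = O(ℓ⁻¹). -/

import Mathlib

open Filter Asymptotics Set Topology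

/-- Mean curvature `H = 2 R' / R` of the spherically symmetric spheres. -/
noncomputable def Hf (R : ℝ → ℝ) : ℝ → ℝ := fun ℓ => 2 * deriv R ℓ / R ℓ

/-- `trK = K_ℓ + 2 K_R`. -/
def trKf (Kl KR : ℝ → ℝ) : ℝ → ℝ := fun ℓ => Kl ℓ + 2 * KR ℓ

/-- Helper: if `|f'| ≤ u'` on `[L,∞)`, then `|f x - f L| ≤ u x - u L` there. -/
lemma abs_sub_le_of_hasDerivAt_le {L : ℝ} {f u f' u' : ℝ → ℝ}
    (hf : ∀ x ∈ Set.Ici L, HasDerivAt f (f' x) x)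
    (hu : ∀ x ∈ Set.Ici L, HasDerivAt u (u' x) x)
    (hle : ∀ x ∈ Set.Ici L, |f' x| ≤ u' x) :
    ∀ x ∈ Set.Ici L, |f x - f L| ≤ u x - u L := by
  have mono : ∀ (g g' : ℝ → ℝ), (∀ x ∈ Set.Ici L, HasDerivAt g (g' x) x) →
      (∀ x ∈ Set.Ici L, 0 ≤ g' x) → MonotoneOn g (Set.Ici L) := by
    intro g g' hg hg'
    apply monotoneOn_of_deriv_nonneg (convex_Ici L)
    · exact fun x hx => (hg x hx).continuousAt.continuousWithinAt
    · intro x hx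
      rw [interior_Ici] at hx
      exact ((hg x (le_of_lt hx : L ≤ x)).differentiableAt).differentiableWithinAt
    · intro x hx
      rw [interior_Ici] at hx
      rw [(hg x (le_of_lt hx : L ≤ x)).deriv]
      exact hg' x (le_of_lt hx : L ≤ x)
  have h1 : MonotoneOn (fun x => u x - f x) (Set.Ici L) := by
    apply mono _ (fun x => u' x - f' x)
    · exact fun x hx => (hu x hx).sub (hf x hx)
    · intro x hx
      have := hle x hx
      have := abs_nonneg (f' x)
      have := le_abs_self (f' x)
      linarith
  have h2 : MonotoneOn (fun x => u x + f x) (Set.Ici L) := by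
    apply mono _ (fun x => u' x + f' x)
    · exact fun x hx => (hu x hx).add (hf x hx)
    · intro x hx
      have := hle x hx
      have := neg_abs_le (f' x)
      linarith
  intro x hx
  have e1 := h1 (self_mem_Ici) hx hx
  have e2 := h2 (self_mem_Ici) hx hx
  simp only at e1 e2
  rw [abs_sub_le_iff]
  constructor <;> linarith

set_option maxHeartbeats 1000000 in
/-- Any uniformly bounded `C¹` solution of the reduced Jang equation
`∂_ℓ k = −K_ℓ k² − H k + trK` on `[ℓ₀,∞)`, under the stated decay conditions,
tends to `0` at infinity, and in fact `|k(ℓ)| = O(ℓ⁻¹)`. -/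
theorem jang_bounded_solution_decay (ℓ₀ : ℝ) (R Kl KR k : ℝ → ℝ)
    (hR : ContDiffOn ℝ (⊤ : ℕ∞) R (Set.Ici ℓ₀))
    (hKl : ContDiffOn ℝ (⊤ : ℕ∞) Kl (Set.Ici ℓ₀))
    (hKR : ContDiffOn ℝ (⊤ : ℕ∞) KR (Set.Ici ℓ₀))
    (hRpos : ∀ ℓ ∈ Set.Ici ℓ₀, 0 < R ℓ)
    (hHdec : (fun ℓ => Hf R ℓ - 2 / ℓ) =O[atTop] fun ℓ => (ℓ ^ 2)⁻¹)
    (hKldec : Kl =O[atTop] fun ℓ => (ℓ ^ 2)⁻¹)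
    (htrKdec : trKf Kl KR =O[atTop] fun ℓ => (ℓ ^ 3)⁻¹)
    (hode : ∀ ℓ ∈ Set.Ici ℓ₀,
      HasDerivAt k (-(Kl ℓ) * k ℓ ^ 2 - Hf R ℓ * k ℓ + trKf Kl KR ℓ) ℓ)
    (hbdd : ∃ M : ℝ, ∀ ℓ ∈ Set.Ici ℓ₀, |k ℓ| ≤ M) :
    Tendsto k atTop (nhds 0) ∧ k =O[atTop] fun ℓ => ℓ⁻¹ := by
  obtain ⟨M, hM⟩ := hbdd
  -- extract eventual bounds from the big-O hypotheses
  rw [isBigO_iff] at hHdec hKldec htrKdec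
  obtain ⟨CH, hCH⟩ := hHdec
  obtain ⟨CK, hCK⟩ := hKldec
  obtain ⟨Ct, hCt⟩ := htrKdec
  rw [eventually_atTop] at hCH hCK hCt
  obtain ⟨a₁, ha₁⟩ := hCH
  obtain ⟨a₂, ha₂⟩ := hCK
  obtain ⟨a₃, ha₃⟩ := hCt
  set L : ℝ := max (max a₁ (max a₂ a₃)) (max (ℓ₀ + 1) 1) with hLdef
  have hL1 : (1 : ℝ) ≤ L := le_trans (le_max_right _ _) (le_max_right _ _)
  have hLl₀ : ℓ₀ < L := lt_of_lt_of_le (by linarith) (le_trans (le_max_left _ _) (le_max_right _ _))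
  have hLa₁ : a₁ ≤ L := le_trans (le_max_left _ _) (le_max_left _ _)
  have hLa₂ : a₂ ≤ L := le_trans (le_trans (le_max_left _ _) (le_max_right _ _)) (le_max_left _ _)
  have hLa₃ : a₃ ≤ L := le_trans (le_trans (le_max_right _ _) (le_max_right _ _)) (le_max_left _ _)
  have hL0 : (0 : ℝ) < L := by linarith
  -- basic facts for x ≥ L
  have hxfacts : ∀ x ∈ Set.Ici L, ℓ₀ < x ∧ (0 : ℝ) < x ∧ (1 : ℝ) ≤ x := by
    intro x hx
    have : L ≤ x := hx
    exact ⟨by linarith, by linarith, by linarith⟩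
  have hRd : ∀ x ∈ Set.Ici L, HasDerivAt R (deriv R x) x := by
    intro x hx
    obtain ⟨h1, h2, h3⟩ := hxfacts x hx
    exact ((hR.contDiffAt (Ici_mem_nhds h1)).differentiableAt (by simp)).hasDerivAt
  have hkd : ∀ x ∈ Set.Ici L, HasDerivAt k
      (-(Kl x) * k x ^ 2 - Hf R x * k x + trKf Kl KR x) x := by
    intro x hx
    exact hode x (le_of_lt (hxfacts x hx).1)
  have hRx : ∀ x ∈ Set.Ici L, 0 < R x := fun x hx => hRpos x (le_of_lt (hxfacts x hx).1)
  -- norm simplifications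
  have hnorm2 : ∀ x : ℝ, 0 < x → ‖((x : ℝ) ^ 2)⁻¹‖ = (x ^ 2)⁻¹ := by
    intro x hx; rw [Real.norm_eq_abs, abs_of_nonneg (by positivity)]
  have hnorm3 : ∀ x : ℝ, 0 < x → ‖((x : ℝ) ^ 3)⁻¹‖ = (x ^ 3)⁻¹ := by
    intro x hx; rw [Real.norm_eq_abs, abs_of_nonneg (by positivity)]
  -- nonnegativity of constants
  have hCH0 : 0 ≤ CH := by
    have := ha₁ L hLa₁
    rw [hnorm2 L hL0] at this
    nlinarith [norm_nonneg (Hf R L - 2 / L), inv_pos.mpr (pow_pos hL0 2)]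
  have hCK0 : 0 ≤ CK := by
    have := ha₂ L hLa₂
    rw [hnorm2 L hL0] at this
    nlinarith [norm_nonneg (Kl L), inv_pos.mpr (pow_pos hL0 2)]
  have hCt0 : 0 ≤ Ct := by
    have := ha₃ L hLa₃
    rw [hnorm3 L hL0] at this
    nlinarith [norm_nonneg (trKf Kl KR L), inv_pos.mpr (pow_pos hL0 3)]
  have hM0 : 0 ≤ M := le_trans (abs_nonneg _) (hM ℓ₀ self_mem_Ici)
  -- Step 1: bound R between c₁ x and c₂ x
  set φ : ℝ → ℝ := fun t => Real.log (R t) - Real.log t with hφdef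
  have hφd : ∀ x ∈ Set.Ici L, HasDerivAt φ (deriv R x / R x - x⁻¹) x := by
    intro x hx
    obtain ⟨h1, h2, h3⟩ := hxfacts x hx
    exact ((hRd x hx).log (ne_of_gt (hRx x hx))).sub (Real.hasDerivAt_log (ne_of_gt h2))
  have hφ'bound : ∀ x ∈ Set.Ici L, |deriv R x / R x - x⁻¹| ≤ CH / 2 * (x ^ 2)⁻¹ := by
    intro x hx
    obtain ⟨h1, h2, h3⟩ := hxfacts x hx
    have hb := ha₁ x (le_trans hLa₁ hx)
    rw [hnorm2 x h2, Real.norm_eq_abs] at hb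
    have heq : Hf R x - 2 / x = 2 * (deriv R x / R x - x⁻¹) := by
      simp only [Hf]
      field_simp
    rw [heq, abs_mul, abs_two] at hb
    linarith
  have hφu : ∀ x ∈ Set.Ici L, HasDerivAt (fun t => -(CH / 2) * t⁻¹) (CH / 2 * (x ^ 2)⁻¹) x := by
    intro x hx
    obtain ⟨h1, h2, h3⟩ := hxfacts x hx
    have := (hasDerivAt_inv (ne_of_gt h2)).const_mul (-(CH / 2))
    convert this using 1
    all_goals first | rfl | ring
  have hφbound := abs_sub_le_of_hasDerivAt_le hφd hφu hφ'bound
  set B : ℝ := CH / 2 * L⁻¹ with hBdef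
  have hφB : ∀ x ∈ Set.Ici L, |φ x - φ L| ≤ B := by
    intro x hx
    obtain ⟨h1, h2, h3⟩ := hxfacts x hx
    have := hφbound x hx
    have hxinv : 0 ≤ CH / 2 * x⁻¹ := by positivity
    calc |φ x - φ L| ≤ -(CH / 2) * x⁻¹ - -(CH / 2) * L⁻¹ := this
      _ ≤ B := by rw [hBdef]; nlinarith
  set c₁ : ℝ := Real.exp (φ L - B) with hc₁def
  set c₂ : ℝ := Real.exp (φ L + B) with hc₂def
  have hc₁0 : 0 < c₁ := Real.exp_pos _
  have hc₂0 : 0 < c₂ := Real.exp_pos _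
  have hRlow : ∀ x ∈ Set.Ici L, c₁ * x ≤ R x := by
    intro x hx
    obtain ⟨h1, h2, h3⟩ := hxfacts x hx
    have hb := hφB x hx
    have : φ L - B ≤ φ x := by
      have := abs_sub_le_iff.mp hb
      linarith [this.2]
    have hexp : Real.exp (φ L - B) ≤ Real.exp (φ x) := Real.exp_le_exp.mpr this
    have : Real.exp (φ x) = R x / x := by
      simp only [hφdef, Real.exp_sub, Real.exp_log (hRx x hx), Real.exp_log h2]
    rw [this] at hexp
    rw [hc₁def]
    calc Real.exp (φ L - B) * x ≤ R x / x * x := by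
          apply mul_le_mul_of_nonneg_right hexp (le_of_lt h2)
      _ = R x := by field_simp
  have hRhigh : ∀ x ∈ Set.Ici L, R x ≤ c₂ * x := by
    intro x hx
    obtain ⟨h1, h2, h3⟩ := hxfacts x hx
    have hb := hφB x hx
    have : φ x ≤ φ L + B := by
      have := abs_sub_le_iff.mp hb
      linarith [this.1]
    have hexp : Real.exp (φ x) ≤ Real.exp (φ L + B) := Real.exp_le_exp.mpr this
    have heq : Real.exp (φ x) = R x / x := by
      simp only [hφdef, Real.exp_sub, Real.exp_log (hRx x hx), Real.exp_log h2]
    rw [heq] at hexp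
    rw [hc₂def]
    calc R x = R x / x * x := by field_simp
      _ ≤ Real.exp (φ L + B) * x := mul_le_mul_of_nonneg_right hexp (le_of_lt h2)
  -- Step 2: F = R² k has bounded derivative
  set F : ℝ → ℝ := fun t => R t ^ 2 * k t with hFdef
  have hFd : ∀ x ∈ Set.Ici L,
      HasDerivAt F (R x ^ 2 * (trKf Kl KR x - Kl x * k x ^ 2)) x := by
    intro x hx
    obtain ⟨h1, h2, h3⟩ := hxfacts x hx
    have := ((hRd x hx).pow 2).mul (hkd x hx)
    convert this using 1
    iterate 3 rfl
    have hRne : R x ≠ 0 := ne_of_gt (hRx x hx)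
    simp only [Hf, Pi.pow_apply]
    field_simp
    ring
  set D : ℝ := c₂ ^ 2 * (Ct + CK * M ^ 2) with hDdef
  have hD0 : 0 ≤ D := by positivity
  have hF'bound : ∀ x ∈ Set.Ici L, |R x ^ 2 * (trKf Kl KR x - Kl x * k x ^ 2)| ≤ D := by
    intro x hx
    obtain ⟨h1, h2, h3⟩ := hxfacts x hx
    have hKlB := ha₂ x (le_trans hLa₂ hx)
    have htrB := ha₃ x (le_trans hLa₃ hx)
    rw [hnorm2 x h2, Real.norm_eq_abs] at hKlB
    rw [hnorm3 x h2, Real.norm_eq_abs] at htrB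
    have hkB := hM x (le_of_lt h1)
    have hR2 : R x ^ 2 ≤ c₂ ^ 2 * x ^ 2 := by
      have := hRhigh x hx
      nlinarith [hRx x hx, mul_pos hc₂0 h2]
    have habs : |trKf Kl KR x - Kl x * k x ^ 2| ≤ Ct * (x ^ 3)⁻¹ + CK * (x ^ 2)⁻¹ * M ^ 2 := by
      calc |trKf Kl KR x - Kl x * k x ^ 2| ≤ |trKf Kl KR x| + |Kl x * k x ^ 2| := abs_sub _ _
        _ = |trKf Kl KR x| + |Kl x| * |k x| ^ 2 := by rw [abs_mul, abs_pow, sq_abs]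
        _ ≤ Ct * (x ^ 3)⁻¹ + CK * (x ^ 2)⁻¹ * M ^ 2 := by
            have h1' : |Kl x| * |k x| ^ 2 ≤ CK * (x ^ 2)⁻¹ * M ^ 2 := by
              apply mul_le_mul hKlB _ (by positivity) (by positivity)
              exact pow_le_pow_left₀ (abs_nonneg _) hkB 2
            linarith
    have hx20 : (0:ℝ) < x ^ 2 := by positivity
    have hx30 : (0:ℝ) < x ^ 3 := by positivity
    calc |R x ^ 2 * (trKf Kl KR x - Kl x * k x ^ 2)|
        = R x ^ 2 * |trKf Kl KR x - Kl x * k x ^ 2| := by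
          rw [abs_mul, abs_of_nonneg (by positivity : (0:ℝ) ≤ R x ^ 2)]
      _ ≤ c₂ ^ 2 * x ^ 2 * (Ct * (x ^ 3)⁻¹ + CK * (x ^ 2)⁻¹ * M ^ 2) := by
          apply mul_le_mul hR2 habs (abs_nonneg _) (by positivity)
      _ = c₂ ^ 2 * (Ct * (x ^ 2 * (x ^ 3)⁻¹) + CK * M ^ 2 * (x ^ 2 * (x ^ 2)⁻¹)) := by ring
      _ = c₂ ^ 2 * (Ct * x⁻¹ + CK * M ^ 2) := by
          have h2c : x ^ 2 * (x ^ 2)⁻¹ = 1 := mul_inv_cancel₀ (by positivity)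
          have h3c : x ^ 2 * (x ^ 3)⁻¹ = x⁻¹ := by
            have hx0 : x ≠ 0 := h2.ne'
            field_simp
          rw [h2c, h3c]
          ring
      _ ≤ D := by
          rw [hDdef]
          have hxinv : x⁻¹ ≤ 1 := by
            rw [inv_le_one_iff₀]; right; linarith
          exact mul_le_mul_of_nonneg_left (by nlinarith) (pow_nonneg hc₂0.le 2)
  have hFu : ∀ x ∈ Set.Ici L, HasDerivAt (fun t => D * t) D x := by
    intro x hx
    simpa using (hasDerivAt_id x).const_mul D
  have hFbound := abs_sub_le_of_hasDerivAt_le hFd hFu hF'bound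
  -- final bound: |k x| ≤ E / x
  set E : ℝ := (|F L| + D) / c₁ ^ 2 with hEdef
  have hkbound : ∀ x ∈ Set.Ici L, |k x| ≤ E * x⁻¹ := by
    intro x hx
    obtain ⟨h1, h2, h3⟩ := hxfacts x hx
    have hF := hFbound x hx
    have hFx : |F x| ≤ |F L| + D * x := by
      have := abs_sub_abs_le_abs_sub (F x) (F L)
      have hDL : 0 ≤ D * L := by positivity
      nlinarith
    have hRsq : c₁ ^ 2 * x ^ 2 ≤ R x ^ 2 := by
      have := hRlow x hx
      nlinarith [mul_pos hc₁0 h2, hRx x hx]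
    have hkx : |k x| = |F x| / R x ^ 2 := by
      rw [hFdef]
      simp only
      rw [abs_mul, abs_of_nonneg (by positivity : (0:ℝ) ≤ R x ^ 2)]
      field_simp [ne_of_gt (hRx x hx)]
    rw [hkx]
    have hR20 : (0:ℝ) < R x ^ 2 := pow_pos (hRx x hx) 2
    have hc₁x : (0:ℝ) < c₁ ^ 2 * x ^ 2 := mul_pos (pow_pos hc₁0 2) (pow_pos h2 2)
    have hnumnn : (0:ℝ) ≤ |F L| + D * x := add_nonneg (abs_nonneg _) (mul_nonneg hD0 h2.le)
    have hnum : |F L| + D * x ≤ (|F L| + D) * x := by nlinarith [abs_nonneg (F L)]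
    have key : ((|F L| + D) * x) / (c₁ ^ 2 * x ^ 2) = (|F L| + D) / c₁ ^ 2 * x⁻¹ := by
      have hc' : (c₁:ℝ) ^ 2 ≠ 0 := (pow_pos hc₁0 2).ne'
      have hx' : x ≠ 0 := h2.ne'
      field_simp
    calc |F x| / R x ^ 2 ≤ (|F L| + D * x) / (c₁ ^ 2 * x ^ 2) :=
          div_le_div₀ hnumnn hFx hc₁x hRsq
      _ ≤ ((|F L| + D) * x) / (c₁ ^ 2 * x ^ 2) :=
          div_le_div₀ (mul_nonneg (add_nonneg (abs_nonneg _) hD0) h2.le) hnum hc₁x le_rfl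
      _ = E * x⁻¹ := by rw [hEdef, key]
  have hE0 : 0 ≤ E := div_nonneg (add_nonneg (abs_nonneg _) hD0) (by positivity)
  have hbig : k =O[atTop] fun ℓ => ℓ⁻¹ := by
    rw [isBigO_iff]
    refine ⟨E, ?_⟩
    filter_upwards [eventually_ge_atTop L] with x hx
    obtain ⟨h1, h2, h3⟩ := hxfacts x hx
    rw [Real.norm_eq_abs, Real.norm_eq_abs, abs_of_nonneg (inv_nonneg.mpr h2.le)]
    exact hkbound x hx
  exact ⟨hbig.trans_tendsto tendsto_inv_atTop_zero, hbig⟩
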